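/- Let (M, R) be a Noetherian confluent MRS and J ⊆ R a coherent sub-relation with normal-form function nf_J for (M, J). If a →_R b in M, then ReflTransGen stepJ (nf_J a) (nf_J b), i.e. nf_J a reduces to nf_J b in the collapsed system (M_J, R_J). -/
import Mathlib


namespace MRS

/-- One-step rewriting relation of an MRS `(M, R)`. -/
def Step {M : Type*} [Monoid M] (R : M → M → Prop) (a b : M) : Prop :=
  ∃ x y s t : M, a = x * s * y ∧ b = x * t * y ∧ R s t

/-- An element is irreducible for a relation if it only rewrites to itself. -/
def IrredRel {α : Type*} (r : α → α → Prop) (a : α) : Prop :=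
  ∀ b, r a b → a = b

/-- A relation is Noetherian if there is no infinite chain of non-trivial steps. -/
def NoetherianRel {α : Type*} (r : α → α → Prop) : Prop :=
  ¬ ∃ f : ℕ → α, ∀ n, r (f n) (f (n + 1)) ∧ f n ≠ f (n + 1)

/-- Confluence of a relation. -/
def ConfluentRel {α : Type*} (r : α → α → Prop) : Prop :=
  ∀ u a b : α, Relation.ReflTransGen r u a → Relation.ReflTransGen r u b →
    ∃ c, Relation.ReflTransGen r a c ∧ Relation.ReflTransGen r b c

/-- `nf` is a normal-form function for the MRS `(M, R)`. -/
def IsNF {M : Type*} [Monoid M] (R : M → M → Prop) (nf : M → M) : Prop :=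
  ∀ u, Relation.ReflTransGen (Step R) u (nf u) ∧ IrredRel (Step R) (nf u)

end MRS

open MRS

namespace MRS

/-- The one-step relation of the collapsed system `(M_J, R_J)`, expressed on `M`. -/
def StepJ {M : Type*} [Monoid M] (R J : M → M → Prop) (nfJ : M → M) (a b : M) : Prop :=
  ∃ x y s t : M, IrredRel (Step J) x ∧ IrredRel (Step J) y ∧ R s t ∧ ¬ J s t ∧
    a = nfJ (x * s * y) ∧ b = nfJ (x * t * y)

end MRS

theorem irred_rtg {α : Type*} {r : α → α → Prop} {w c : α} (hw : MRS.IrredRel r w)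
    (h : Relation.ReflTransGen r w c) : w = c := by
  induction h with
  | refl => rfl
  | tail _ hstep ih => subst ih; exact hw _ hstep

theorem step_mono {M : Type*} [Monoid M] {J : M → M → Prop} {u v : M} (x y : M)
    (h : MRS.Step J u v) : MRS.Step J (x * u * y) (x * v * y) := by
  obtain ⟨p, q, s, t, hu, hv, hst⟩ := h
  exact ⟨x * p, q * y, s, t, by rw [hu]; group, by rw [hv]; group, hst⟩

theorem rtg_mono {M : Type*} [Monoid M] {J : M → M → Prop} {u v : M} (x y : M)
    (h : Relation.ReflTransGen (MRS.Step J) u v) :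
    Relation.ReflTransGen (MRS.Step J) (x * u * y) (x * v * y) := by
  induction h with
  | refl => exact .refl
  | tail _ hstep ih => exact ih.tail (step_mono x y hstep)

theorem nf_unique {M : Type*} [Monoid M] {J : M → M → Prop}
    (hConfJ : MRS.ConfluentRel (MRS.Step J)) {nfJ : M → M} (hnfJ : MRS.IsNF J nfJ)
    {u w : M} (h : Relation.ReflTransGen (MRS.Step J) u w) (hw : MRS.IrredRel (MRS.Step J) w) :
    nfJ u = w := by
  obtain ⟨c, h1, h2⟩ := hConfJ u (nfJ u) w (hnfJ u).1 h
  exact (irred_rtg (hnfJ u).2 h1).trans (irred_rtg hw h2).symm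

/-- If `a →_R b`, then `nf_J a` reduces to `nf_J b` in the collapsed
system `(M_J, R_J)`. -/
theorem stmt_15 {M : Type*} [Monoid M] (R J : M → M → Prop)
    (hJR : ∀ s t : M, J s t → R s t)
    (hNoethR : NoetherianRel (Step R)) (hConfR : ConfluentRel (Step R))
    (hConfJ : ConfluentRel (Step J))
    (nfJ : M → M) (hnfJ : IsNF J nfJ)
    (hSNoeth : NoetherianRel (StepJ R J nfJ))
    (hSConf : ∀ u a b : M, IrredRel (Step J) u →
      Relation.ReflTransGen (StepJ R J nfJ) u a →
      Relation.ReflTransGen (StepJ R J nfJ) u b →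
      ∃ c, Relation.ReflTransGen (StepJ R J nfJ) a c ∧
        Relation.ReflTransGen (StepJ R J nfJ) b c)
    (a b : M) (hab : Step R a b) :
    Relation.ReflTransGen (StepJ R J nfJ) (nfJ a) (nfJ b) := by
  obtain ⟨x, y, s, t, ha, hb, hst⟩ := hab
  subst ha hb
  by_cases hJ : J s t
  · have hstep : Relation.ReflTransGen (Step J) (x * s * y) (x * t * y) :=
      .single ⟨x, y, s, t, rfl, rfl, hJ⟩
    have : nfJ (x * s * y) = nfJ (x * t * y) :=
      nf_unique hConfJ hnfJ (hstep.trans (hnfJ _).1) (hnfJ _).2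
    rw [this]
  · have key : ∀ u : M, Relation.ReflTransGen (Step J) (x * u * y) (nfJ x * u * nfJ y) := by
      intro u
      have h1 : Relation.ReflTransGen (Step J) (1 * x * (u * y)) (1 * nfJ x * (u * y)) :=
        rtg_mono 1 (u * y) (hnfJ x).1
      have h2 : Relation.ReflTransGen (Step J) (nfJ x * u * y * 1) (nfJ x * u * nfJ y * 1) :=
        rtg_mono (nfJ x * u) 1 (hnfJ y).1
      simp only [one_mul, mul_one, ← mul_assoc] at h1 h2
      exact h1.trans h2
    have ea : nfJ (x * s * y) = nfJ (nfJ x * s * nfJ y) :=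
      nf_unique hConfJ hnfJ ((key s).trans (hnfJ _).1) (hnfJ _).2
    have eb : nfJ (x * t * y) = nfJ (nfJ x * t * nfJ y) :=
      nf_unique hConfJ hnfJ ((key t).trans (hnfJ _).1) (hnfJ _).2
    rw [ea, eb]
    exact .single ⟨nfJ x, nfJ y, s, t, (hnfJ x).2, (hnfJ y).2, hst, hJ, rfl, rfl⟩
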